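/- Let μ ≥ 0, D > 0, and let {(x_i, g_i, f_i)}_{i∈I} be a finite set of triples in E × E × ℝ. There exists a μ-strongly convex proper closed function F : E → ℝ ∪ {+∞} whose effective domain is contained in the ball of radius D centered at the origin, with F(x_i) = f_i and g_i ∈ ∂F(x_i) for all i, if and only if for all i, j ∈ I: f_i − f_j − ⟨g_j, x_i − x_j⟩ ≥ (μ/2)‖x_i − x_j‖² and ‖x_j‖ ≤ D. -/

import Mathlib

variable {E : Type*} [NormedAddCommGroup E] [InnerProductSpace ℝ E] [FiniteDimensional ℝ E]

/-- `f` is a proper, closed (lower semicontinuous) convex extended-real-valued function. -/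
def IsProperClosedConvex (f : E → EReal) : Prop :=
  (∃ x, f x ≠ ⊤) ∧ (∀ x, f x ≠ ⊥) ∧ LowerSemicontinuous f ∧
    ∀ x y : E, ∀ t : ℝ, 0 ≤ t → t ≤ 1 →
      f (t • x + (1 - t) • y) ≤ (t : EReal) * f x + ((1 - t : ℝ) : EReal) * f y

/-- `g` is a subgradient of `f` at `x`. -/
def IsSubgradientAt (f : E → EReal) (x g : E) : Prop :=
  ∀ y, f x + ((inner ℝ g (y - x) : ℝ) : EReal) ≤ f y

/-- `f` is `μ`-strongly convex (i.e. `f - μ/2‖·‖²` is convex). -/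
def IsStronglyConvexWith (μ : ℝ) (f : E → EReal) : Prop :=
  ∀ x y : E, ∀ t : ℝ, 0 ≤ t → t ≤ 1 →
    f (t • x + (1 - t) • y) ≤
      (t : EReal) * f x + ((1 - t : ℝ) : EReal) * f y -
        ((μ / 2 * (t * (1 - t)) * ‖x - y‖ ^ 2 : ℝ) : EReal)

lemma combo_normsq (a b : E) (t : ℝ) :
    ‖t•a + (1-t)•b‖^2 = t*‖a‖^2 + (1-t)*‖b‖^2 - t*(1-t)*‖a-b‖^2 := by
  have h : ∀ v : E, ‖v‖^2 = inner ℝ v v := fun v => (real_inner_self_eq_norm_sq v).symm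
  simp only [h, inner_add_left, inner_add_right, inner_smul_left, inner_smul_right,
    inner_sub_left, inner_sub_right, RCLike.conj_to_real, real_inner_comm b a]
  ring

lemma ereal_sub_le_self (a : EReal) (c : ℝ) (hc : 0 ≤ c) : a - (c:EReal) ≤ a := by
  have h1 : a - (c:EReal) ≤ a - ((0:ℝ):EReal) :=
    EReal.sub_le_sub le_rfl (by exact_mod_cast hc)
  simpa using h1

open Classical in
/-- Main construction lemma: indicator-type function built from a continuous finite
function on a closed convex set. -/
lemma aux_construct (μ D : ℝ) (hμ : 0 ≤ μ) (K : Set E) (hKc : IsClosed K)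
    (hKconv : Convex ℝ K) (z0 : E) (hz0 : z0 ∈ K) (hKD : ∀ z ∈ K, ‖z‖ ≤ D)
    (h : E → ℝ) (hcont : Continuous h)
    (hsc : ∀ z ∈ K, ∀ w ∈ K, ∀ t : ℝ, 0 < t → t < 1 →
      h (t•z+(1-t)•w) ≤ t*h z + (1-t)*h w - μ/2*(t*(1-t))*‖z-w‖^2) :
    IsProperClosedConvex (fun z => if z ∈ K then ((h z : ℝ) : EReal) else ⊤) ∧
    IsStronglyConvexWith μ (fun z => if z ∈ K then ((h z : ℝ) : EReal) else ⊤) ∧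
    ∀ z, (if z ∈ K then ((h z : ℝ) : EReal) else ⊤) ≠ ⊤ → ‖z‖ ≤ D := by
  set F : E → EReal := fun z => if z ∈ K then ((h z : ℝ) : EReal) else ⊤ with hF
  have hFge : ∀ w, ((h w : ℝ) : EReal) ≤ F w := by
    intro w
    by_cases hw : w ∈ K <;> simp [hF, hw]
  have hstrong : IsStronglyConvexWith μ F := by
    intro z w t ht0 ht1
    rcases eq_or_lt_of_le ht0 with rfl | ht0'
    · simp [sub_zero]
    rcases eq_or_lt_of_le ht1 with rfl | ht1'
    · norm_num [sub_zero]
    have hq : ∀ (a : EReal), a ≠ ⊥ → ((1-t:ℝ):EReal) * a ≠ ⊥ := by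
      intro a ha
      induction a with
      | bot => exact absurd rfl ha
      | coe r => rw [← EReal.coe_mul]; exact EReal.coe_ne_bot _
      | top => rw [EReal.coe_mul_top_of_pos (by linarith)]; exact top_ne_bot
    have hFw_ne_bot : F w ≠ ⊥ := by by_cases hw : w ∈ K <;> simp [hF, hw]
    by_cases hz : z ∈ K
    · by_cases hw : w ∈ K
      · have hmid : t•z + (1-t)•w ∈ K := hKconv hz hw ht0 (by linarith) (by ring)
        simp only [hF, if_pos hz, if_pos hw, if_pos hmid]
        rw [← EReal.coe_mul, ← EReal.coe_mul, ← EReal.coe_add, ← EReal.coe_sub,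
          EReal.coe_le_coe_iff]
        exact hsc z hz w hw t ht0' ht1'
      · have : ((1-t:ℝ):EReal) * F w = ⊤ := by
          simp only [hF, if_neg hw]
          exact EReal.coe_mul_top_of_pos (by linarith)
        have htop : (t:EReal) * F z + ((1-t:ℝ):EReal) * F w -
            ((μ/2*(t*(1-t))*‖z-w‖^2 : ℝ):EReal) = ⊤ := by
          have hnb : (t:EReal) * F z ≠ ⊥ := by
            simp only [hF, if_pos hz, ← EReal.coe_mul]
            exact EReal.coe_ne_bot _
          rw [this, EReal.add_top_of_ne_bot hnb, EReal.top_sub_coe]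
        rw [htop]; exact le_top
    · have : (t:EReal) * F z = ⊤ := by
        simp only [hF, if_neg hz]
        exact EReal.coe_mul_top_of_pos (by exact_mod_cast ht0')
      have htop : (t:EReal) * F z + ((1-t:ℝ):EReal) * F w -
          ((μ/2*(t*(1-t))*‖z-w‖^2 : ℝ):EReal) = ⊤ := by
        rw [this, EReal.top_add_of_ne_bot (hq _ hFw_ne_bot), EReal.top_sub_coe]
      rw [htop]; exact le_top
  refine ⟨⟨⟨z0, by simp [hF, hz0]⟩, fun z => by by_cases hz : z ∈ K <;> simp [hF, hz],
    ?_, ?_⟩, hstrong, ?_⟩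
  · -- lower semicontinuous
    intro z c hc
    by_cases hz : z ∈ K
    · have hc' : c < ((h z : ℝ) : EReal) := by simpa [hF, hz] using hc
      have hlsc : LowerSemicontinuous fun w => ((h w : ℝ) : EReal) :=
        (continuous_coe_real_ereal.comp hcont).lowerSemicontinuous
      exact (hlsc z c hc').mono fun w hw => lt_of_lt_of_le hw (hFge w)
    · have hmem : Kᶜ ∈ nhds z := hKc.isOpen_compl.mem_nhds hz
      refine Filter.eventually_of_mem hmem fun w hw => ?_
      have : F w = ⊤ := by rw [hF]; exact if_neg hw
      show F w > c; rw [this]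
      exact lt_of_lt_of_le hc (by simp [hF, hz])
  · -- convexity
    intro z w t ht0 ht1
    refine le_trans (hstrong z w t ht0 ht1) ?_
    refine ereal_sub_le_self _ _ ?_
    have h1 : (0:ℝ) ≤ t * (1 - t) := mul_nonneg ht0 (by linarith)
    have hn : (0:ℝ) ≤ ‖z - w‖^2 := by positivity
    exact mul_nonneg (mul_nonneg (by linarith) h1) hn
  · -- domain in ball
    intro z hz
    by_cases h' : z ∈ K
    · exact hKD z h'
    · exact absurd (by simp [hF, h']) hz

/-- Interpolation by a `μ`-strongly convex proper closed function with domain contained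
in the ball of radius `D` centered at the origin. -/
theorem stmt2 {ι : Type*} [Fintype ι] (μ D : ℝ) (hμ : 0 ≤ μ) (hD : 0 < D)
    (x g : ι → E) (f : ι → ℝ) :
    (∃ F : E → EReal, IsProperClosedConvex F ∧ IsStronglyConvexWith μ F ∧
        (∀ z, F z ≠ ⊤ → ‖z‖ ≤ D) ∧
        ∀ i, F (x i) = ((f i : ℝ) : EReal) ∧ IsSubgradientAt F (x i) (g i)) ↔
      ∀ i j, μ / 2 * ‖x i - x j‖ ^ 2 ≤ f i - f j - (inner ℝ (g j) (x i - x j) : ℝ) ∧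
        ‖x j‖ ≤ D := by
  classical
  constructor
  · rintro ⟨F, hproper, hstrong, hdom, hinterp⟩ i j
    obtain ⟨hFi, _⟩ := hinterp i
    obtain ⟨hFj, hsubj⟩ := hinterp j
    refine ⟨?_, hdom _ (by rw [hFj]; exact EReal.coe_ne_top _)⟩
    set d := x i - x j with hd
    set c := f i - f j - (inner ℝ (g j) d : ℝ) with hc
    have key : ∀ t : ℝ, 0 < t → t < 1 → μ/2*(1-t)*‖d‖^2 ≤ c := by
      intro t ht0 ht1
      have hmid : (t • x i + (1-t) • x j) - x j = t • d := by
        rw [hd]; module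
      have hsub := hsubj (t • x i + (1-t) • x j)
      rw [hFj, hmid, real_inner_smul_right] at hsub
      have hconv := hstrong (x i) (x j) t ht0.le ht1.le
      rw [hFi, hFj, ← EReal.coe_mul, ← EReal.coe_mul, ← EReal.coe_add, ← EReal.coe_sub] at hconv
      have hchain : ((f j + t * (inner ℝ (g j) d : ℝ) : ℝ) : EReal) ≤
          ((t * f i + (1-t) * f j - μ/2*(t*(1-t))*‖x i - x j‖^2 : ℝ) : EReal) := by
        calc ((f j + t * (inner ℝ (g j) d : ℝ) : ℝ) : EReal)
            = ((f j : ℝ) : EReal) + ((t * (inner ℝ (g j) d : ℝ) : ℝ) : EReal) := by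
              rw [EReal.coe_add]
          _ ≤ F (t • x i + (1-t) • x j) := hsub
          _ ≤ _ := hconv
      rw [EReal.coe_le_coe_iff] at hchain
      have hreal : f j + t * (inner ℝ (g j) d : ℝ) ≤
          t * f i + (1-t) * f j - μ/2*(t*(1-t))*‖d‖^2 := by
        rw [← hd] at hchain; linarith
      have h2 : t * (μ/2*(1-t)*‖d‖^2) ≤ t * c := by rw [hc]; nlinarith
      exact le_of_mul_le_mul_left h2 ht0
    have hT : Filter.Tendsto (fun t : ℝ => μ/2*(1-t)*‖d‖^2) (nhdsWithin 0 (Set.Ioi 0))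
        (nhds (μ/2*‖d‖^2)) := by
      have hco : Continuous fun t : ℝ => μ/2*(1-t)*‖d‖^2 := by continuity
      have h0 : Filter.Tendsto (fun t : ℝ => μ/2*(1-t)*‖d‖^2) (nhdsWithin 0 (Set.Ioi 0))
          (nhds (μ/2*(1-(0:ℝ))*‖d‖^2)) := (hco.tendsto 0).mono_left nhdsWithin_le_nhds
      simpa using h0
    have hev : ∀ᶠ t in nhdsWithin (0:ℝ) (Set.Ioi 0), μ/2*(1-t)*‖d‖^2 ≤ c := by
      filter_upwards [Ioo_mem_nhdsGT one_pos] with t ht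
      exact key t ht.1 ht.2
    exact le_of_tendsto hT hev
  · intro hyp
    rcases isEmpty_or_nonempty ι with hempty | hne
    · refine ⟨fun z => if z ∈ ({0} : Set E) then ((0:ℝ):EReal) else ⊤, ?_⟩
      obtain ⟨h1, h2, h3⟩ := aux_construct μ D hμ ({0} : Set E) isClosed_singleton
        (convex_singleton 0) 0 rfl (fun z hz => by simp_all; positivity)
        (fun _ => 0) continuous_const
        (by rintro z rfl w rfl t _ _; simp)
      exact ⟨h1, h2, h3, fun i => isEmptyElim i⟩
    · set q : ι → E → ℝ := fun i z => f i + (inner ℝ (g i) (z - x i) : ℝ) + μ/2*‖z - x i‖^2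
        with hq
      set h : E → ℝ := fun z => Finset.univ.sup' Finset.univ_nonempty (fun i => q i z) with hh
      set K : Set E := convexHull ℝ (Set.range x) with hK
      have hxK : ∀ i, x i ∈ K := fun i => subset_convexHull ℝ _ (Set.mem_range_self i)
      have hqcont : ∀ i, Continuous (q i) := by
        intro i
        apply Continuous.add
        apply Continuous.add continuous_const
        · exact (continuous_const.inner (continuous_id.sub continuous_const))
        · exact (continuous_const.mul ((continuous_id.sub continuous_const).norm.pow 2))
      have hcont : Continuous h := Continuous.finset_sup'_apply Finset.univ_nonempty
        (fun i _ => hqcont i)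
      have hqmid : ∀ i (z w : E) (t : ℝ),
          q i (t•z+(1-t)•w) = t * q i z + (1-t) * q i w - μ/2*(t*(1-t))*‖z-w‖^2 := by
        intro i z w t
        have e1 : (t•z+(1-t)•w) - x i = t•(z - x i) + (1-t)•(w - x i) := by module
        have e2 : (z - x i) - (w - x i) = z - w := by abel
        rw [hq]
        simp only [e1, combo_normsq, e2, inner_add_right, real_inner_smul_right]
        ring
      have hqle : ∀ i z, q i z ≤ h z := fun i z =>
        Finset.le_sup' (fun i => q i z) (Finset.mem_univ i)
      have hqxx : ∀ i j, q i (x j) ≤ f j := by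
        intro i j
        obtain ⟨h1, _⟩ := hyp j i
        rw [hq]; simp only
        nlinarith [h1]
      have hhx : ∀ j, h (x j) = f j := by
        intro j
        refine le_antisymm (Finset.sup'_le _ _ fun i _ => hqxx i j) ?_
        have : q j (x j) = f j := by simp [hq]
        rw [← this]; exact hqle j (x j)
      refine ⟨fun z => if z ∈ K then ((h z : ℝ) : EReal) else ⊤, ?_⟩
      obtain ⟨h1, h2, h3⟩ := aux_construct μ D hμ K
        (((Set.finite_range x).isCompact_convexHull ℝ).isClosed) (convex_convexHull ℝ _)
        (x (Classical.arbitrary ι)) (hxK _)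
        (fun z hz => by
          have : K ⊆ Metric.closedBall 0 D := convexHull_min
            (by rintro _ ⟨i, rfl⟩; rw [Metric.mem_closedBall, dist_zero_right]
                exact (hyp i i).2)
            (convex_closedBall 0 D)
          simpa [dist_zero_right] using this hz)
        h hcont
        (by
          intro z _ w _ t ht0 ht1
          refine Finset.sup'_le _ _ fun i _ => ?_
          rw [hqmid i z w t]
          have h1 : t * q i z ≤ t * h z :=
            mul_le_mul_of_nonneg_left (hqle i z) ht0.le
          have h2 : (1-t) * q i w ≤ (1-t) * h w :=
            mul_le_mul_of_nonneg_left (hqle i w) (by linarith)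
          exact sub_le_sub (add_le_add h1 h2) le_rfl)
      refine ⟨h1, h2, h3, fun j => ⟨by simp [hxK j, hhx j], ?_⟩⟩
      intro y
      by_cases hy : y ∈ K
      · simp only [if_pos (hxK j), if_pos hy, hhx j, ← EReal.coe_add, EReal.coe_le_coe_iff]
        have := hqle j y
        rw [hq] at this; simp only at this
        nlinarith [sq_nonneg ‖y - x j‖, this]
      · simp only [if_pos (hxK j), if_neg hy, ← EReal.coe_add]
        exact le_top
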